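/- Suppose P̄(X,Y,Z,W) = 0 for all X,Y,Z,W ∈ V, with a ≠ 0, b ≠ 0 and a + (n−1)b ≠ 0. Then the Ricci tensor satisfies S(Y,Z) = (r/n) g(Y,Z) for all Y,Z ∈ V; that is, a pseudo-projectively flat algebraic curvature tensor is Einstein. -/

import Mathlib

open scoped RealInnerProductSpace

theorem stmt3
    {V : Type*} [NormedAddCommGroup V] [InnerProductSpace ℝ V]
    (n : ℕ) (hn : 3 < n)
    (e : Module.Basis (Fin n) ℝ V) (he : Orthonormal ℝ e)
    (Rb : V → V → V → V → ℝ)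
    (hlin1 : ∀ (c : ℝ) (X X' Y Z W : V),
      Rb (c • X + X') Y Z W = c * Rb X Y Z W + Rb X' Y Z W)
    (hlin2 : ∀ (c : ℝ) (X Y Y' Z W : V),
      Rb X (c • Y + Y') Z W = c * Rb X Y Z W + Rb X Y' Z W)
    (hlin3 : ∀ (c : ℝ) (X Y Z Z' W : V),
      Rb X Y (c • Z + Z') W = c * Rb X Y Z W + Rb X Y Z' W)
    (hlin4 : ∀ (c : ℝ) (X Y Z W W' : V),
      Rb X Y Z (c • W + W') = c * Rb X Y Z W + Rb X Y Z W')
    (hskew1 : ∀ X Y Z W : V, Rb X Y Z W = - Rb Y X Z W)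
    (hskew2 : ∀ X Y Z W : V, Rb X Y Z W = - Rb X Y W Z)
    (hpair : ∀ X Y Z W : V, Rb X Y Z W = Rb Z W X Y)
    (S : V → V → ℝ) (hS : ∀ Y Z : V, S Y Z = ∑ i, Rb (e i) Y Z (e i))
    (r : ℝ) (hr : r = ∑ i, S (e i) (e i))
    (a b : ℝ)
    (Pb : V → V → V → V → ℝ)
    (hP : ∀ X Y Z W : V, Pb X Y Z W =
      a * Rb X Y Z W
      + b * (S Y Z * ⟪X, W⟫ - S X Z * ⟪Y, W⟫)
      - (r / n) * (a / ((n : ℝ) - 1) + b)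
        * (⟪Y, Z⟫ * ⟪X, W⟫ - ⟪X, Z⟫ * ⟪Y, W⟫))
    (ha : a ≠ 0) (hb : b ≠ 0) (hab : a + ((n : ℝ) - 1) * b ≠ 0)
    (hflat : ∀ X Y Z W : V, Pb X Y Z W = 0) :
    ∀ Y Z : V, S Y Z = (r / n) * ⟪Y, Z⟫ := by
  intro Y Z
  have hortho : ∀ i j : Fin n, ⟪e i, e j⟫ = if i = j then 1 else 0 := by
    rw [← orthonormal_iff_ite]; exact he
  -- repr via inner
  have hrepr : ∀ (X : V) (i : Fin n), ⟪X, e i⟫ = e.repr X i := by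
    intro X i
    conv_lhs => rw [← e.sum_repr X]
    rw [sum_inner]
    rw [Finset.sum_eq_single i]
    · rw [real_inner_smul_left, hortho i i, if_pos rfl, mul_one]
    · intro j _ hj
      rw [real_inner_smul_left, hortho j i, if_neg hj, mul_zero]
    · intro h; exact absurd (Finset.mem_univ i) h
  -- S is linear in first argument
  have hSlin : ∀ (c : ℝ) (X X' Z : V), S (c • X + X') Z = c * S X Z + S X' Z := by
    intro c X X' Z
    rw [hS, hS, hS, Finset.mul_sum, ← Finset.sum_add_distrib]
    exact Finset.sum_congr rfl fun i _ => hlin2 c (e i) X X' Z (e i)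
  have hSadd : ∀ (X X' Z : V), S (X + X') Z = S X Z + S X' Z := by
    intro X X' Z
    have := hSlin 1 X X' Z
    simpa using this
  have hSzero : ∀ Z : V, S 0 Z = 0 := by
    intro Z
    have := hSadd 0 0 Z
    simp at this
    linarith
  have hSsmul : ∀ (c : ℝ) (X Z : V), S (c • X) Z = c * S X Z := by
    intro c X Z
    have := hSlin c X 0 Z
    simpa [hSzero] using this
  -- expand S Y Z over the basis
  have hSY : ∀ Z : V, S Y Z = ∑ i, e.repr Y i * S (e i) Z := by
    intro Z
    let f : V →ₗ[ℝ] ℝ :=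
      { toFun := fun X => S X Z
        map_add' := fun X X' => hSadd X X' Z
        map_smul' := fun c X => hSsmul c X Z }
    have : S Y Z = f Y := rfl
    rw [this]
    conv_lhs => rw [← e.sum_repr Y]
    rw [map_sum]
    simp [f]
  have hinnerY : ⟪Y, Z⟫ = ∑ i, e.repr Y i * ⟪e i, Z⟫ := by
    conv_lhs => rw [← e.sum_repr Y]
    rw [sum_inner]
    simp [real_inner_smul_left]
  -- key contraction
  have hn1 : ((n : ℝ) - 1) ≠ 0 := by
    have : (3 : ℝ) < (n : ℝ) := by exact_mod_cast hn
    intro h; linarith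
  have hnn : (n : ℝ) ≠ 0 := by
    have : (3 : ℝ) < (n : ℝ) := by exact_mod_cast hn
    intro h; linarith
  have hsum : ∑ i, Pb (e i) Y Z (e i) = 0 := by
    exact Finset.sum_eq_zero fun i _ => hflat (e i) Y Z (e i)
  have hexp : ∑ i, Pb (e i) Y Z (e i)
      = a * S Y Z + b * ((n : ℝ) * S Y Z - S Y Z)
        - (r / n) * (a / ((n : ℝ) - 1) + b) * ((n : ℝ) * ⟪Y, Z⟫ - ⟪Y, Z⟫) := by
    have hd : ∀ i : Fin n, ⟪e i, e i⟫ = 1 := fun i => by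
      rw [hortho i i, if_pos rfl]
    calc ∑ i, Pb (e i) Y Z (e i)
        = ∑ i, (a * Rb (e i) Y Z (e i)
            + b * (S Y Z * ⟪e i, e i⟫ - S (e i) Z * ⟪Y, e i⟫)
            - (r / n) * (a / ((n : ℝ) - 1) + b)
              * (⟪Y, Z⟫ * ⟪e i, e i⟫ - ⟪e i, Z⟫ * ⟪Y, e i⟫)) :=
          Finset.sum_congr rfl fun i _ => hP (e i) Y Z (e i)
      _ = a * (∑ i, Rb (e i) Y Z (e i))
            + b * (S Y Z * (∑ i : Fin n, ⟪e i, e i⟫) - ∑ i, S (e i) Z * ⟪Y, e i⟫)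
            - (r / n) * (a / ((n : ℝ) - 1) + b)
              * (⟪Y, Z⟫ * (∑ i : Fin n, ⟪e i, e i⟫) - ∑ i, ⟪e i, Z⟫ * ⟪Y, e i⟫) := by
          rw [Finset.sum_sub_distrib, Finset.sum_add_distrib, ← Finset.mul_sum,
            ← Finset.mul_sum, ← Finset.mul_sum, Finset.sum_sub_distrib,
            ← Finset.mul_sum, Finset.sum_sub_distrib, ← Finset.mul_sum]
      _ = a * S Y Z + b * ((n : ℝ) * S Y Z - S Y Z)
            - (r / n) * (a / ((n : ℝ) - 1) + b) * ((n : ℝ) * ⟪Y, Z⟫ - ⟪Y, Z⟫) := by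
          have h1 : (∑ i : Fin n, ⟪e i, e i⟫) = (n : ℝ) := by
            rw [Finset.sum_congr rfl fun i _ => hd i]; simp
          have h2 : (∑ i, S (e i) Z * ⟪Y, e i⟫) = S Y Z := by
            rw [hSY Z]
            exact Finset.sum_congr rfl fun i _ => by rw [hrepr Y i]; ring
          have h3 : (∑ i, ⟪e i, Z⟫ * ⟪Y, e i⟫) = ⟪Y, Z⟫ := by
            rw [hinnerY]
            exact Finset.sum_congr rfl fun i _ => by rw [hrepr Y i]; ring
          rw [h1, h2, h3, ← hS]; ring
  rw [hsum] at hexp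
  have hfac : (a / ((n : ℝ) - 1) + b) * ((n : ℝ) - 1) = a + ((n : ℝ) - 1) * b := by
    field_simp
  have h0 : (a + ((n : ℝ) - 1) * b) * (S Y Z - (r / n) * ⟪Y, Z⟫) = 0 := by
    linear_combination (-1 : ℝ) * hexp + (r / (n : ℝ)) * ⟪Y, Z⟫ * hfac
  rcases mul_eq_zero.mp h0 with h | h
  · exact absurd h hab
  · exact sub_eq_zero.mp h
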